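/- Let p be an odd prime, let a, b ∈ ℂ_p with R = |a − b|_p > 0, let Φ be an interlocked family of path sequences, and let f be holomorphic on 𝒜(a,b) with |f(x)|_p ≤ M for all x ∈ 𝒜(a,b). If the line integral ∫_{𝒜(a,b),Φ} f(x) dx exists, then |∫_{𝒜(a,b),Φ} f(x) dx|_p ≤ M·R. -/

import Mathlib

/-!
Throughout, `K` plays the role of `ℂ_p`, the completion of an algebraic closure of `ℚ_p`:
it is a complete, algebraically closed, nonarchimedean (ultrametric) normed field equipped
with an isometric `ℚ_[p]`-algebra structure (hypothesis `hKext`).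
-/

open scoped BigOperators

/-- A *path sequence*: a function defined (positive-valued and strictly increasing)
for `k ≥ k₀`, for some positive integer `k₀`. -/
structure PathSeq where
  toFun : ℕ → ℕ
  k₀ : ℕ
  k₀_pos : 0 < k₀
  pos : ∀ k, k₀ ≤ k → 0 < toFun k
  mono : ∀ k l, k₀ ≤ k → k < l → toFun k < toFun l

/-- The Riemann-type sum `A_{f,φ}(k)` (with `N = φ(k)`):
`p^{-N} ∑_ζ (b - a) ζ · f (a + (b - a) ζ)`, `ζ` ranging over the `p^N`-th roots of unity. -/
noncomputable def Asum (p : ℕ) (K : Type*) [NormedField K] (a b : K) (f : K → K) (N : ℕ) : K :=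
  ((p : K) ^ N)⁻¹ *
    ∑ ζ ∈ Polynomial.nthRootsFinset (p ^ N) (1 : K), (b - a) * ζ * f (a + (b - a) * ζ)

/-- `ψ` is, for `k ≥ k₀`, a subsequence of the path sequence `φ`. -/
def SubseqFrom (ψ φ : PathSeq) (k₀ : ℕ) : Prop :=
  ∃ σ : ℕ → ℕ, (∀ k l, k₀ ≤ k → k < l → σ k < σ l) ∧
    ∀ k, k₀ ≤ k → φ.k₀ ≤ σ k ∧ ψ.toFun k = φ.toFun (σ k)

/-- An *interlocked* family of path sequences: nonempty, and any two members have a common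
member-subsequence. -/
def Interlocked (Φ : Set PathSeq) : Prop :=
  Φ.Nonempty ∧ ∀ φ₁ ∈ Φ, ∀ φ₂ ∈ Φ, ∃ φ₃ ∈ Φ, ∃ k₀ : ℕ, 0 < k₀ ∧
    SubseqFrom φ₃ φ₁ k₀ ∧ SubseqFrom φ₃ φ₂ k₀

/-- `∫_{𝒜(a,b),Φ} f(x) dx = L`: for every `ε > 0` there are `φ ∈ Φ` and `M` such that
`|A_{f,φ}(k) - L| < ε` for all `k > M` (in the domain of `φ`). -/
def HasIntegral (p : ℕ) (K : Type*) [NormedField K] (a b : K) (f : K → K)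
    (Φ : Set PathSeq) (L : K) : Prop :=
  ∀ ε : ℝ, 0 < ε → ∃ φ ∈ Φ, ∃ M : ℕ, φ.k₀ ≤ M ∧
    ∀ k, M < k → ‖Asum p K a b f (φ.toFun k) - L‖ < ε

/-- `f` is holomorphic on `S`: its values on `S` are given by the single power series with
coefficients `c`, centered at `b`, convergent on `S`. -/
def HolomorphicOn' (K : Type*) [NormedField K] (c : ℕ → K) (b : K) (f : K → K)
    (S : Set K) : Prop :=
  ∀ x ∈ S, Summable (fun n : ℕ => c n * (x - b) ^ n) ∧ f x = ∑' n : ℕ, c n * (x - b) ^ n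

/-- The arc `𝒜(a,b)`: the open disc of radius `R = |a - b|` around `b`. -/
def arc (K : Type*) [NormedField K] (a b : K) : Set K := {x : K | ‖x - b‖ < ‖a - b‖}

/-- `c` are controlled coefficients of order `β` (for the radius `R`). -/
def Controlled (K : Type*) [NormedField K] (c : ℕ → K) (R β : ℝ) : Prop :=
  ∃ M n₀ : ℝ, 0 < n₀ ∧ ∀ n : ℕ, n₀ < (n : ℝ) → ‖c n‖ * R ^ n < M * (n : ℝ) ^ β

/-- The interlocked family `Φ_α = {k ↦ α + λ k : λ ∈ ℤ⁺}`. -/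
def PhiAlpha (α : ℕ) : Set PathSeq :=
  {φ : PathSeq | ∃ lam : ℕ, 0 < lam ∧ ∀ k : ℕ, φ.toFun k = α + lam * k}


open Polynomial Finset in
lemma sum_pow_nthRoots {K : Type*} [Field K] [IsAlgClosed K] {n : ℕ} (hn : 0 < n)
    (hnK : (n : K) ≠ 0) (k : ℕ) :
    ∑ ζ ∈ nthRootsFinset n (1 : K), ζ ^ k = if n ∣ k then (n : K) else 0 := by
  classical
  have : NeZero (n : K) := ⟨hnK⟩
  obtain ⟨ζ₀, hζ₀⟩ := HasEnoughRootsOfUnity.exists_primitiveRoot K n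
  have hinj : ∀ i ∈ Finset.range n, ∀ j ∈ Finset.range n, ζ₀ ^ i = ζ₀ ^ j → i = j :=
    fun i hi j hj h => hζ₀.pow_inj (Finset.mem_range.1 hi) (Finset.mem_range.1 hj) h
  have himg : nthRootsFinset n (1 : K) = (Finset.range n).image (ζ₀ ^ ·) := by
    symm
    apply Finset.eq_of_subset_of_card_le
    · intro x hx
      obtain ⟨i, -, rfl⟩ := Finset.mem_image.1 hx
      refine (mem_nthRootsFinset hn _).2 ?_
      have h1 : (ζ₀ ^ i) ^ n = (ζ₀ ^ n) ^ i := by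
        rw [← pow_mul, ← pow_mul, mul_comm]
      rw [h1, hζ₀.pow_eq_one, one_pow]
    · rw [hζ₀.card_nthRootsFinset, Finset.card_image_of_injOn fun i hi j hj h => hinj i hi j hj h,
        Finset.card_range]
  rw [himg, Finset.sum_image hinj]
  have hpow : ∀ i, (ζ₀ ^ i) ^ k = (ζ₀ ^ k) ^ i := fun i => by
    rw [← pow_mul, ← pow_mul, mul_comm]
  rw [Finset.sum_congr rfl fun i _ => hpow i]
  by_cases hdvd : n ∣ k
  · rw [if_pos hdvd, (hζ₀.pow_eq_one_iff_dvd k).2 hdvd]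
    simp
  · rw [if_neg hdvd]
    have h1 : ζ₀ ^ k ≠ 1 := fun h => hdvd ((hζ₀.pow_eq_one_iff_dvd k).1 h)
    have h2 : (ζ₀ ^ k) ^ n = 1 := by
      rw [← pow_mul, mul_comm, pow_mul, hζ₀.pow_eq_one, one_pow]
    have h3 := geom_sum_mul (ζ₀ ^ k) n
    rw [h2, sub_self] at h3
    rcases mul_eq_zero.1 h3 with h | h
    · exact h
    · exact absurd (sub_eq_zero.1 h) h1

lemma norm_eq_one_of_mem_nthRoots {K : Type*} [NormedField K] {n : ℕ} (hn : 0 < n) {ζ : K}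
    (hζ : ζ ∈ Polynomial.nthRootsFinset n (1 : K)) : ‖ζ‖ = 1 := by
  have h1 : ζ ^ n = 1 := (Polynomial.mem_nthRootsFinset hn _).1 hζ
  have h2 : ‖ζ‖ ^ n = 1 := by rw [← norm_pow, h1, norm_one]
  rcases lt_trichotomy ‖ζ‖ 1 with h | h | h
  · have := pow_lt_one₀ (norm_nonneg ζ) h hn.ne'
    rw [h2] at this; exact absurd this (lt_irrefl 1)
  · exact h
  · have := one_lt_pow₀ h hn.ne'
    rw [h2] at this; exact absurd this (lt_irrefl 1)

open Finset in
lemma norm_sub_one_lt {K : Type*} [NormedField K] [IsUltrametricDist K] {p : ℕ}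
    (hp : p.Prime) (hnat1 : ∀ m : ℕ, ‖(m : K)‖ ≤ 1) (hpK : ‖(p : K)‖ = (p : ℝ)⁻¹)
    {N : ℕ} (hN : 0 < N) {ζ : K} (hζ : ζ ^ (p ^ N) = 1) : ‖ζ - 1‖ < 1 := by
  by_contra hcon
  push_neg at hcon
  set u := ζ - 1 with hu
  have hone : (1 : ℝ) ≤ ‖u‖ := hcon
  have hu0 : (0 : ℝ) < ‖u‖ := lt_of_lt_of_le one_pos hone
  have hm2 : 2 ≤ p ^ N := le_trans hp.two_le (Nat.le_self_pow hN.ne' p)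
  obtain ⟨Mm, hMm⟩ : ∃ Mm, p ^ N = Mm + 1 := ⟨p ^ N - 1, by omega⟩
  have hb : (u + 1) ^ (p ^ N) = 1 := by rw [hu]; simpa using hζ
  rw [add_pow] at hb
  simp only [one_pow, mul_one] at hb
  rw [hMm, Finset.sum_range_succ'] at hb
  simp only [pow_zero, Nat.choose_zero_right, Nat.cast_one, one_mul, mul_one] at hb
  have hS : ∑ k ∈ Finset.range (Mm + 1), u ^ (k + 1) * ((Mm + 1).choose (k + 1) : K) = 0 := by
    linear_combination hb
  rw [Finset.sum_range_succ, Nat.choose_self] at hS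
  simp only [Nat.cast_one, mul_one] at hS
  have hEq : u ^ (Mm + 1) = -∑ k ∈ Finset.range Mm, u ^ (k + 1) * ((Mm + 1).choose (k + 1) : K) := by
    linear_combination hS
  have hnorm : ‖∑ k ∈ Finset.range Mm, u ^ (k + 1) * ((Mm + 1).choose (k + 1) : K)‖
      ≤ (p : ℝ)⁻¹ * ‖u‖ ^ Mm := by
    apply IsUltrametricDist.norm_sum_le_of_forall_le_of_nonneg
    · positivity
    · intro k hk
      rw [norm_mul, norm_pow]
      have hk' : k + 1 ≤ Mm := by have := Finset.mem_range.1 hk; omega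
      have h1 : ‖u‖ ^ (k + 1) ≤ ‖u‖ ^ Mm := pow_le_pow_right₀ hone hk'
      have hdvd : p ∣ (Mm + 1).choose (k + 1) := by
        rw [← hMm]
        exact hp.dvd_choose_pow (by omega) (by omega)
      obtain ⟨t, ht⟩ := hdvd
      have h2 : ‖(((Mm + 1).choose (k + 1) : ℕ) : K)‖ ≤ (p : ℝ)⁻¹ := by
        rw [ht]
        push_cast
        rw [norm_mul, hpK]
        calc (p : ℝ)⁻¹ * ‖(t : K)‖ ≤ (p : ℝ)⁻¹ * 1 :=
              mul_le_mul_of_nonneg_left (hnat1 t) (by positivity)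
          _ = (p : ℝ)⁻¹ := mul_one _
      calc ‖u‖ ^ (k + 1) * ‖(((Mm + 1).choose (k + 1) : ℕ) : K)‖
          ≤ ‖u‖ ^ Mm * (p : ℝ)⁻¹ := mul_le_mul h1 h2 (norm_nonneg _) (by positivity)
        _ = (p : ℝ)⁻¹ * ‖u‖ ^ Mm := mul_comm _ _
  have hfin : ‖u‖ ^ (Mm + 1) ≤ (p : ℝ)⁻¹ * ‖u‖ ^ Mm := by
    rw [← norm_pow, hEq, norm_neg]
    exact hnorm
  have hp1 : (1 : ℝ) < p := by exact_mod_cast hp.one_lt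
  have hpinv : (p : ℝ)⁻¹ < 1 := by
    rw [inv_lt_one₀ (by positivity)]
    exact hp1
  have hx : (0 : ℝ) < ‖u‖ ^ Mm := pow_pos hu0 Mm
  rw [pow_succ] at hfin
  nlinarith [hfin, hx, hone, hpinv]

open Finset Filter in
lemma gauss_bound {K : Type*} [NormedField K] [CompleteSpace K] [IsAlgClosed K]
    [IsUltrametricDist K] [CharZero K] {p : ℕ} (hp : p.Prime)
    (hnat1 : ∀ m : ℕ, ‖(m : K)‖ ≤ 1)
    (hpK : ‖(p : K)‖ = (p : ℝ)⁻¹)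
    (hqone : ∀ q : ℕ, ¬ p ∣ q → ‖(q : K)‖ = 1)
    (a b : K) (hR : 0 < ‖a - b‖) (c : ℕ → K) (f : K → K)
    (hf : HolomorphicOn' K c b f (arc K a b)) (M : ℝ) (hM : ∀ x ∈ arc K a b, ‖f x‖ ≤ M)
    (n : ℕ) : ‖c n‖ * ‖a - b‖ ^ n ≤ M := by
  classical
  have hM0 : 0 ≤ M := le_trans (norm_nonneg (f b)) (hM b (by simpa [arc] using hR))
  -- Step 1: the bound at every radius strictly less than R
  have key : ∀ t : K, ‖t‖ < ‖a - b‖ → ‖c n * t ^ n‖ ≤ M := by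
    intro t ht
    refine le_of_forall_pos_le_add ?_
    intro δ hδ
    have hbt : b + t ∈ arc K a b := by simpa [arc] using ht
    have hsum_t : Summable fun m : ℕ => c m * t ^ m := by
      have := (hf (b + t) hbt).1
      simpa using this
    have htend : Tendsto (fun m : ℕ => ‖c m * t ^ m‖) atTop (nhds 0) := by
      simpa using hsum_t.tendsto_atTop_zero.norm
    obtain ⟨Q, hQ⟩ := (Metric.tendsto_atTop.1 htend) δ hδ
    have hQ' : ∀ m : ℕ, Q ≤ m → ‖c m * t ^ m‖ < δ := by
      intro m hm
      have := hQ m hm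
      rwa [Real.dist_eq, sub_zero, abs_of_nonneg (norm_nonneg _)] at this
    -- choose q = p ^ j - 1
    set j := Q + n + 2 with hj
    have hpj : Q + n + 1 < p ^ j := by
      calc Q + n + 1 < 2 ^ j := by
            have := Nat.lt_two_pow_self (n := j)
            omega
        _ ≤ p ^ j := Nat.pow_le_pow_left hp.two_le j
    set q := p ^ j - 1 with hq
    have hnq : n < q := by omega
    have hQq : Q ≤ q := by omega
    have hq0 : 0 < q := by omega
    have hqp : ¬ p ∣ q := by
      intro hdvd
      have h1 : p ∣ p ^ j := dvd_pow_self p (by omega)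
      have h2 : p ∣ p ^ j - q := Nat.dvd_sub h1 hdvd
      have h3 : p ^ j - q = 1 := by omega
      rw [h3] at h2
      exact absurd (Nat.dvd_one.1 h2) hp.one_lt.ne'
    have hqK : (q : K) ≠ 0 := Nat.cast_ne_zero.2 hq0.ne'
    have hqKnorm : ‖(q : K)‖ = 1 := hqone q hqp
    set s := Polynomial.nthRootsFinset q (1 : K) with hs
    have hω1 : ∀ ω ∈ s, ‖ω‖ = 1 := fun ω hω => norm_eq_one_of_mem_nthRoots hq0 hω
    have harc : ∀ ω ∈ s, b + t * ω ∈ arc K a b := by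
      intro ω hω
      have : ‖t * ω‖ < ‖a - b‖ := by
        rw [norm_mul, hω1 ω hω, mul_one]; exact ht
      simpa [arc] using this
    set E := (q : K)⁻¹ * ∑ ω ∈ s, ω ^ (q - n) * f (b + t * ω) with hE
    have hEnorm : ‖E‖ ≤ M := by
      rw [hE, norm_mul, norm_inv, hqKnorm, inv_one, one_mul]
      apply IsUltrametricDist.norm_sum_le_of_forall_le_of_nonneg hM0
      intro ω hω
      rw [norm_mul, norm_pow, hω1 ω hω, one_pow, one_mul]
      exact hM _ (harc ω hω)
    -- the summand family
    set F : K → ℕ → K := fun ω m => ω ^ (q - n) * (c m * t ^ m * ω ^ m) with hF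
    have hsumω : ∀ ω ∈ s, Summable (F ω) := by
      intro ω hω
      apply Summable.mul_left
      have h1 := (hf _ (harc ω hω)).1
      have h2 : Summable fun m : ℕ => c m * (t * ω) ^ m := by simpa using h1
      apply h2.congr
      intro m
      rw [mul_pow]; ring
    have hfω : ∀ ω ∈ s, ω ^ (q - n) * f (b + t * ω) = ∑' m : ℕ, F ω m := by
      intro ω hω
      obtain ⟨-, hval⟩ := hf _ (harc ω hω)
      rw [hval, ← tsum_mul_left]
      apply tsum_congr
      intro m
      have : b + t * ω - b = t * ω := by ring
      rw [this, hF, mul_pow]; ring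
    have hEeq : E = ∑' m : ℕ, ((q : K)⁻¹ * ∑ ω ∈ s, F ω m) := by
      rw [hE, Finset.sum_congr rfl hfω, ← Summable.tsum_finsetSum hsumω, tsum_mul_left]
    set g : ℕ → K := fun m => if q ∣ (m + (q - n)) then c m * t ^ m else 0 with hg
    have hterm : ∀ m : ℕ, (q : K)⁻¹ * ∑ ω ∈ s, F ω m = g m := by
      intro m
      have h1 : ∑ ω ∈ s, F ω m = (c m * t ^ m) * ∑ ω ∈ s, ω ^ (m + (q - n)) := by
        rw [Finset.mul_sum]
        apply Finset.sum_congr rfl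
        intro ω hω
        rw [hF, pow_add]; ring
      rw [h1, sum_pow_nthRoots hq0 hqK (m + (q - n))]
      simp only [hg]
      split_ifs with hd
      · field_simp
      · rw [mul_zero, mul_zero]
    have hEg : E = ∑' m : ℕ, g m := by
      rw [hEeq]; exact tsum_congr hterm
    have hgsum : Summable g := by
      have h1 : Summable (fun m : ℕ => ∑ ω ∈ s, F ω m) := summable_sum hsumω
      exact (h1.mul_left ((q : K)⁻¹)).congr hterm
    have hgn : g n = c n * t ^ n := by
      simp only [hg]
      split_ifs with hd
      · rfl
      · exact absurd ⟨1, by omega⟩ hd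
    have hsplit := Summable.tsum_eq_add_tsum_ite hgsum n
    have hrem : ‖∑' m : ℕ, (if m = n then 0 else g m)‖ ≤ δ := by
      apply IsUltrametricDist.norm_tsum_le_of_forall_le_of_nonneg hδ.le
      intro m
      by_cases hmn : m = n
      · simp [hmn, hδ.le]
      · rw [if_neg hmn]
        simp only [hg]
        split_ifs with hd
        · obtain ⟨k, hk⟩ := hd
          have hm : Q ≤ m := by
            rcases Nat.lt_or_ge k 2 with hk2 | hk2
            · interval_cases k <;> omega
            · have : q * 2 ≤ q * k := Nat.mul_le_mul_left q hk2
              omega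
          exact (hQ' m hm).le
        · simpa using hδ.le
    have hEq2 : c n * t ^ n = E - ∑' m : ℕ, (if m = n then 0 else g m) := by
      rw [hEg, hsplit, hgn]; ring
    calc ‖c n * t ^ n‖ = ‖E - ∑' m : ℕ, (if m = n then 0 else g m)‖ := by rw [hEq2]
      _ ≤ ‖E‖ + ‖∑' m : ℕ, (if m = n then 0 else g m)‖ := norm_sub_le _ _
      _ ≤ M + δ := add_le_add hEnorm hrem
  -- Step 2: pass to the boundary radius
  by_cases hc : c n = 0
  · simp [hc, hM0]
  by_contra hlt
  push_neg at hlt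
  set R := ‖a - b‖ with hRdef
  have hcR : 0 < ‖c n‖ * R ^ n := mul_pos (norm_pos_iff.2 hc) (pow_pos hR n)
  set θ := M / (‖c n‖ * R ^ n) with hθ
  have hθ1 : θ < 1 := (div_lt_one hcR).2 hlt
  have hθ0 : 0 ≤ θ := div_nonneg hM0 hcR.le
  have hp0 : (0 : ℝ) < p := by exact_mod_cast hp.pos
  obtain ⟨m, hm⟩ := exists_pow_lt_of_lt_one (x := ((p : ℝ)⁻¹) ^ n) (by positivity) hθ1
  have hm' : θ ^ (m + 1) < ((p : ℝ)⁻¹) ^ n :=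
    lt_of_le_of_lt (pow_le_pow_of_le_one hθ0 hθ1.le (by omega)) hm
  obtain ⟨sK, hsK⟩ := IsAlgClosed.exists_pow_nat_eq (p : K) (n := m + 1) (by omega)
  have hpKnorm : ‖(p : K)‖ = (p : ℝ)⁻¹ := hpK
  have hsnorm : ‖sK‖ ^ (m + 1) = (p : ℝ)⁻¹ := by rw [← norm_pow, hsK, hpKnorm]
  have hs0 : 0 < ‖sK‖ := by
    rcases eq_or_lt_of_le (norm_nonneg sK) with h | h
    · exfalso
      rw [← h] at hsnorm
      simp only [zero_pow (Nat.succ_ne_zero m)] at hsnorm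
      have : (0 : ℝ) < (p : ℝ)⁻¹ := by positivity
      rw [← hsnorm] at this
      exact lt_irrefl 0 this
    · exact h
  have hs1 : ‖sK‖ < 1 := by
    by_contra hge
    push_neg at hge
    have h1 : (1 : ℝ) ≤ ‖sK‖ ^ (m + 1) := one_le_pow₀ hge
    rw [hsnorm] at h1
    have : (p : ℝ)⁻¹ < 1 := by
      rw [inv_lt_one₀ hp0]
      exact_mod_cast hp.one_lt
    linarith
  have ht : ‖(a - b) * sK‖ < R := by
    rw [norm_mul]
    calc R * ‖sK‖ < R * 1 := by apply mul_lt_mul_of_pos_left hs1 hR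
      _ = R := mul_one R
  have hkey := key ((a - b) * sK) ht
  have h1 : θ < ‖sK‖ ^ n := by
    by_contra hle
    push_neg at hle
    have h2 : (‖sK‖ ^ n) ^ (m + 1) ≤ θ ^ (m + 1) :=
      pow_le_pow_left₀ (by positivity) hle (m + 1)
    have h3 : (‖sK‖ ^ n) ^ (m + 1) = ((p : ℝ)⁻¹) ^ n := by
      rw [← pow_mul, mul_comm, pow_mul, hsnorm]
    rw [h3] at h2
    linarith
  have hcontra : M < ‖c n * ((a - b) * sK) ^ n‖ := by
    have hMθ : M = θ * (‖c n‖ * R ^ n) := by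
      rw [hθ]; field_simp
    rw [norm_mul, norm_pow, norm_mul]
    calc M = θ * (‖c n‖ * R ^ n) := hMθ
      _ < ‖sK‖ ^ n * (‖c n‖ * R ^ n) := mul_lt_mul_of_pos_right h1 hcR
      _ = ‖c n‖ * (R * ‖sK‖) ^ n := by rw [mul_pow]; ring
  exact absurd hkey (not_le.2 hcontra)
open Finset in
lemma asum_bound {K : Type*} [NormedField K] [CompleteSpace K] [IsAlgClosed K]
    [IsUltrametricDist K] [CharZero K] {p : ℕ} (hp : p.Prime)
    (hnat1 : ∀ m : ℕ, ‖(m : K)‖ ≤ 1) (hpK : ‖(p : K)‖ = (p : ℝ)⁻¹)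
    (a b : K) (hR : 0 < ‖a - b‖) (c : ℕ → K) (f : K → K)
    (hf : HolomorphicOn' K c b f (arc K a b)) (M : ℝ) (hM0 : 0 ≤ M)
    (hgauss : ∀ n : ℕ, ‖c n‖ * ‖a - b‖ ^ n ≤ M)
    (N : ℕ) (hN : 0 < N) : ‖Asum p K a b f N‖ ≤ M * ‖a - b‖ := by
  classical
  set m := p ^ N with hmdef
  have hm0 : 0 < m := pow_pos hp.pos N
  have hmK : (m : K) ≠ 0 := Nat.cast_ne_zero.2 hm0.ne'
  set s := Polynomial.nthRootsFinset m (1 : K) with hs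
  have hζ1 : ∀ ζ ∈ s, ζ ^ m = 1 := fun ζ hζ => (Polynomial.mem_nthRootsFinset hm0 _).1 hζ
  have hζu : ∀ ζ ∈ s, ‖ζ - 1‖ < 1 := fun ζ hζ => norm_sub_one_lt hp hnat1 hpK hN (hζ1 ζ hζ)
  have harc : ∀ ζ ∈ s, a + (b - a) * ζ ∈ arc K a b := by
    intro ζ hζ
    have h1 : a + (b - a) * ζ - b = (b - a) * (ζ - 1) := by ring
    show ‖a + (b - a) * ζ - b‖ < ‖a - b‖
    rw [h1, norm_mul, norm_sub_rev b a]
    calc ‖a - b‖ * ‖ζ - 1‖ < ‖a - b‖ * 1 := mul_lt_mul_of_pos_left (hζu ζ hζ) hR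
      _ = ‖a - b‖ := mul_one _
  set F : K → ℕ → K := fun ζ k => (b - a) * ζ * (c k * ((b - a) * (ζ - 1)) ^ k) with hF
  have hsumζ : ∀ ζ ∈ s, Summable (F ζ) := by
    intro ζ hζ
    have h1 := (hf _ (harc ζ hζ)).1
    have h2 : a + (b - a) * ζ - b = (b - a) * (ζ - 1) := by ring
    rw [h2] at h1
    exact h1.mul_left _
  have hfval : ∀ ζ ∈ s, (b - a) * ζ * f (a + (b - a) * ζ) = ∑' k : ℕ, F ζ k := by
    intro ζ hζ
    obtain ⟨-, hval⟩ := hf _ (harc ζ hζ)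
    have h2 : a + (b - a) * ζ - b = (b - a) * (ζ - 1) := by ring
    rw [hval, h2, ← tsum_mul_left]
  have hA : Asum p K a b f N = (m : K)⁻¹ * ∑ ζ ∈ s, (b - a) * ζ * f (a + (b - a) * ζ) := by
    rw [hs, hmdef]
    simp only [Asum]
    norm_cast
  have hAs : Asum p K a b f N = ∑' k : ℕ, ((m : K)⁻¹ * ∑ ζ ∈ s, F ζ k) := by
    rw [hA, Finset.sum_congr rfl hfval, ← Summable.tsum_finsetSum hsumζ, tsum_mul_left]
  rw [hAs]
  apply IsUltrametricDist.norm_tsum_le_of_forall_le_of_nonneg (mul_nonneg hM0 (norm_nonneg _))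
  intro k
  have hterm : ∑ ζ ∈ s, F ζ k = (c k * (b - a) ^ (k + 1)) * ∑ ζ ∈ s, ζ * (ζ - 1) ^ k := by
    rw [Finset.mul_sum]
    apply Finset.sum_congr rfl
    intro ζ hζ
    simp only [hF]
    rw [mul_pow, pow_succ]
    ring
  have hT : ‖(m : K)⁻¹ * ∑ ζ ∈ s, ζ * (ζ - 1) ^ k‖ ≤ 1 := by
    have hin : ∀ ζ ∈ s, ζ * (ζ - 1) ^ k
        = ∑ j ∈ Finset.range (k + 1), (-1 : K) ^ (k - j) * (Nat.choose k j : K) * ζ ^ (j + 1) := by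
      intro ζ hζ
      rw [sub_eq_add_neg, add_pow, Finset.mul_sum]
      apply Finset.sum_congr rfl
      intro j hj
      ring
    rw [Finset.sum_congr rfl hin, Finset.sum_comm]
    have h2 : ∀ j ∈ Finset.range (k + 1),
        ∑ ζ ∈ s, (-1 : K) ^ (k - j) * (Nat.choose k j : K) * ζ ^ (j + 1)
          = (-1 : K) ^ (k - j) * (Nat.choose k j : K) * (if m ∣ (j + 1) then (m : K) else 0) := by
      intro j hj
      rw [← Finset.mul_sum, hs, sum_pow_nthRoots hm0 hmK (j + 1)]
    rw [Finset.sum_congr rfl h2, Finset.mul_sum]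
    apply IsUltrametricDist.norm_sum_le_of_forall_le_of_nonneg zero_le_one
    intro j hj
    split_ifs with hd
    · have h3 : (m : K)⁻¹ * ((-1 : K) ^ (k - j) * (Nat.choose k j : K) * (m : K))
          = (-1 : K) ^ (k - j) * (Nat.choose k j : K) := by field_simp
      rw [h3, norm_mul, norm_pow, norm_neg, norm_one, one_pow, one_mul]
      exact hnat1 _
    · simp
  calc ‖(m : K)⁻¹ * ∑ ζ ∈ s, F ζ k‖
      = ‖c k * (b - a) ^ (k + 1)‖ * ‖(m : K)⁻¹ * ∑ ζ ∈ s, ζ * (ζ - 1) ^ k‖ := by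
        rw [hterm, show (m : K)⁻¹ * ((c k * (b - a) ^ (k + 1)) * ∑ ζ ∈ s, ζ * (ζ - 1) ^ k)
            = (c k * (b - a) ^ (k + 1)) * ((m : K)⁻¹ * ∑ ζ ∈ s, ζ * (ζ - 1) ^ k) from by ring,
          norm_mul]
    _ ≤ ‖c k * (b - a) ^ (k + 1)‖ * 1 := mul_le_mul_of_nonneg_left hT (norm_nonneg _)
    _ = ‖c k‖ * ‖a - b‖ ^ k * ‖a - b‖ := by
        rw [mul_one, norm_mul, norm_pow, pow_succ, norm_sub_rev b a]; ring
    _ ≤ M * ‖a - b‖ := mul_le_mul_of_nonneg_right (hgauss k) (norm_nonneg _)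

/-- If `f` is holomorphic on `𝒜(a,b)`, bounded by `M` there, and its line
integral with respect to an interlocked family `Φ` exists, then the integral has norm
at most `M · R`. -/
theorem stmt_1 (p : ℕ) [Fact (Nat.Prime p)] (hp2 : p ≠ 2)
    (K : Type*) [NormedField K] [CompleteSpace K] [IsAlgClosed K] [IsUltrametricDist K]
    [Algebra ℚ_[p] K] (hKext : ∀ q : ℚ_[p], ‖algebraMap ℚ_[p] K q‖ = ‖q‖)
    (a b : K) (hR : 0 < ‖a - b‖) (Φ : Set PathSeq) (hΦ : Interlocked Φ)
    (c : ℕ → K) (f : K → K) (hf : HolomorphicOn' K c b f (arc K a b))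
    (M : ℝ) (hM : ∀ x ∈ arc K a b, ‖f x‖ ≤ M)
    (L : K) (hL : HasIntegral p K a b f Φ L) :
    ‖L‖ ≤ M * ‖a - b‖ := by
  have hprime : p.Prime := Fact.out
  have : CharZero K := charZero_of_injective_algebraMap (algebraMap ℚ_[p] K).injective
  have hnatnorm : ∀ m : ℕ, ‖(m : K)‖ = ‖(m : ℚ_[p])‖ := fun m => by
    rw [← map_natCast (algebraMap ℚ_[p] K) m, hKext]
  have hnat1 : ∀ m : ℕ, ‖(m : K)‖ ≤ 1 := fun m => by
    rw [hnatnorm m]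
    have h1 := Padic.norm_int_le_one (p := p) (m : ℤ)
    simpa using h1
  have hpK : ‖(p : K)‖ = (p : ℝ)⁻¹ := by rw [hnatnorm p]; exact Padic.norm_p
  have hqone : ∀ q : ℕ, ¬ p ∣ q → ‖(q : K)‖ = 1 := by
    intro q hq
    refine le_antisymm (hnat1 q) ?_
    by_contra hlt
    push_neg at hlt
    rw [hnatnorm q] at hlt
    have h2 : ‖((q : ℤ) : ℚ_[p])‖ < 1 := by simpa using hlt
    have h3 := (Padic.norm_intCast_lt_one_iff (k := (q : ℤ))).1 h2
    exact hq (by exact_mod_cast h3)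
  have hM0 : 0 ≤ M := le_trans (norm_nonneg (f b)) (hM b (by simpa [arc] using hR))
  have hgauss := gauss_bound hprime hnat1 hpK hqone a b hR c f hf M hM
  have hbound := asum_bound hprime hnat1 hpK a b hR c f hf M hM0 hgauss
  refine le_of_forall_pos_le_add ?_
  intro ε hε
  obtain ⟨φ, hφ, M₀, hM₀, hk⟩ := hL ε hε
  have hk1 := hk (M₀ + 1) (Nat.lt_succ_self M₀)
  have hNpos : 0 < φ.toFun (M₀ + 1) := φ.pos (M₀ + 1) (le_trans hM₀ (Nat.le_succ M₀))
  calc ‖L‖ = ‖Asum p K a b f (φ.toFun (M₀ + 1))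
        - (Asum p K a b f (φ.toFun (M₀ + 1)) - L)‖ := by ring_nf
    _ ≤ ‖Asum p K a b f (φ.toFun (M₀ + 1))‖
        + ‖Asum p K a b f (φ.toFun (M₀ + 1)) - L‖ := norm_sub_le _ _
    _ ≤ M * ‖a - b‖ + ε := add_le_add (hbound _ hNpos) hk1.le
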